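/- For every positive integer m, 4m/π < cot(π/(4m+2)) < √2·(m+1). -/

import Mathlib

open Real

theorem cot_bounds (m : ℕ) (hm : 0 < m) :
    4 * m / Real.pi < Real.cot (Real.pi / (4 * m + 2)) ∧
      Real.cot (Real.pi / (4 * m + 2)) < Real.sqrt 2 * (m + 1) := by
  have hm1 : (1:ℝ) ≤ m := by exact_mod_cast hm
  have hπ := Real.pi_gt_d6
  have hπ' := Real.pi_lt_d2
  have hπ0 := Real.pi_pos
  set x := Real.pi / (4 * (m:ℝ) + 2) with hxdef
  have hn : (6:ℝ) ≤ 4*m+2 := by linarith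
  have hn0 : (0:ℝ) < 4*m+2 := by linarith
  have hx0 : 0 < x := div_pos hπ0 hn0
  have hx6 : x ≤ Real.pi/6 := div_le_div_of_nonneg_left hπ0.le (by norm_num) hn
  have hx1 : x < 1 := lt_of_le_of_lt hx6 (by linarith)
  have hxπ2 : x < Real.pi/2 := lt_of_le_of_lt hx6 (by linarith)
  have hs0 : 0 < Real.sin x := Real.sin_pos_of_pos_of_lt_pi hx0 (by linarith)
  have hs : Real.sin x < x := Real.sin_lt hx0
  have hc : 1 - x^2/2 < Real.cos x := Real.one_sub_sq_div_two_lt_cos hx0.ne'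
  have hc0 : 0 < Real.cos x := Real.cos_pos_of_mem_Ioo ⟨by linarith, hxπ2⟩
  have hcot : Real.cot x = Real.cos x / Real.sin x := Real.cot_eq_cos_div_sin x
  constructor
  · -- lower bound
    rw [hcot, lt_div_iff₀ hs0, div_mul_eq_mul_div, div_lt_iff₀ hπ0]
    -- 4m * sin x < cos x * π
    have hxeq : x * (4*(m:ℝ)+2) = Real.pi := by
      rw [hxdef]; field_simp
    nlinarith [sq_nonneg x, mul_pos hx0 hs0, mul_pos hx0 hx0,
      mul_lt_mul_of_pos_left hs hx0, sq_nonneg (x - Real.sin x),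
      mul_pos (mul_pos hx0 hx0) hx0]
  · -- upper bound
    have ht : x < Real.tan x := Real.lt_tan hx0 hxπ2
    rw [Real.tan_eq_sin_div_cos, lt_div_iff₀ hc0] at ht
    have h1 : Real.cot x < 1 / x := by
      rw [hcot, div_lt_div_iff₀ hs0 hx0]
      linarith
    have hs2 : (1.41:ℝ) < Real.sqrt 2 := by
      rw [show (1.41:ℝ) = Real.sqrt (1.41^2) by
        rw [Real.sqrt_sq]; norm_num]
      exact Real.sqrt_lt_sqrt (by positivity) (by norm_num)
    have h2 : 1 / x < Real.sqrt 2 * (m + 1) := by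
      rw [hxdef, one_div_div, div_lt_iff₀ hπ0]
      nlinarith [mul_pos (sub_pos.2 hs2) (sub_pos.2 hπ)]
    linarith
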